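/- Let 𝒜 be a unital associative ℂ-algebra and C(𝒜,𝒜) = ⊕_n C^n(𝒜,𝒜) the graded algebra of Hochschild cochains with product (αβ)(x_1,…,x_{a+b}) = α(x_1,…,x_a)β(x_{a+1},…,x_{a+b}). For q ∈ ℂ∖{0,1}, define δ_q(ω)(x_0,…,x_n) = x_0 ω(x_1,…,x_n) + ∑_{k=1}^n q^k ω(x_0,…,x_{k−1}x_k,…,x_n) − q^n ω(x_0,…,x_{n−1})x_n. Then δ_q(αβ) = δ_q(α)β + q^a α δ_q(β) for α ∈ C^a(𝒜,𝒜), and if q is a primitive N-th root of unity then (δ_q)^N = 0. -/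

import Mathlib

/-- An `𝒜`-valued Hochschild `n`-cochain (an `n`-linear map `𝒜^n → 𝒜`),
encoded as a function of infinite tuples depending only on the coordinates
`x 0, …, x (n-1)` and linear in each of them. -/
def IsHCochain {A : Type*} [Ring A] [Algebra ℂ A] (n : ℕ) (ω : (ℕ → A) → A) : Prop :=
  (∀ x y : ℕ → A, (∀ i < n, x i = y i) → ω x = ω y) ∧
  (∀ i < n, ∀ (x : ℕ → A) (c : ℂ) (u v : A),
    ω (Function.update x i (c • u + v))
      = c • ω (Function.update x i u) + ω (Function.update x i v))

/-- The cup product of cochains: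
`(αβ)(x_1,…,x_{a+b}) = α(x_1,…,x_a) β(x_{a+1},…,x_{a+b})`. -/
def hCochainMul {A : Type*} [Ring A] [Algebra ℂ A] (a : ℕ) (α β : (ℕ → A) → A) :
    (ℕ → A) → A :=
  fun x => α x * β (fun i => x (a + i))

/-- The `q`-Hochschild differential `δ_q` on `n`-cochains:
`δ_q(ω)(x_0,…,x_n) = x_0 ω(x_1,…,x_n) + ∑_{k=1}^n q^k ω(x_0,…,x_{k-1}x_k,…,x_n)
  - q^n ω(x_0,…,x_{n-1}) x_n`. -/
noncomputable def hDelta {A : Type*} [Ring A] [Algebra ℂ A] (q : ℂ) (n : ℕ)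
    (ω : (ℕ → A) → A) : (ℕ → A) → A :=
  fun x =>
    x 0 * ω (fun i => x (i + 1))
      + (∑ k ∈ Finset.Icc 1 n, q ^ k •
          ω (fun i => if i < k - 1 then x i
                      else if i = k - 1 then x (k - 1) * x k else x (i + 1)))
      - q ^ n • (ω x * x n)

/-- Iterates of `δ_q`, starting from degree `n`. -/
noncomputable def hDeltaIter {A : Type*} [Ring A] [Algebra ℂ A] (q : ℂ) :
    ℕ → ℕ → ((ℕ → A) → A) → ((ℕ → A) → A)
  | 0, _, ω => ω
  | m + 1, n, ω => hDelta q (n + m) (hDeltaIter q m n ω)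

-- ===== auxiliary machinery =====
set_option linter.unusedSectionVars false
set_option maxHeartbeats 1000000
namespace QH
variable {A : Type*} [Ring A] [Algebra ℂ A]
-- assume t3 content is above; for testing, include it via copy later
def hshift (x : ℕ → A) : ℕ → A := fun i => x (i + 1)

def hmerge (k : ℕ) (x : ℕ → A) : ℕ → A := fun i =>
  if i < k - 1 then x i else if i = k - 1 then x (k - 1) * x k else x (i + 1)

lemma hmerge_lt {k i : ℕ} (h : i < k - 1) (x : ℕ → A) : hmerge k x i = x i := if_pos h
lemma hmerge_eq {k i : ℕ} (h : i = k - 1) (x : ℕ → A) :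
    hmerge k x i = x (k - 1) * x k := by simp [hmerge, h]
lemma hmerge_gt {k i : ℕ} (h : k - 1 < i) (x : ℕ → A) : hmerge k x i = x (i + 1) := by
  have h1 : ¬ i < k - 1 := by omega
  have h2 : ¬ i = k - 1 := by omega
  simp [hmerge, h1, h2]

lemma hmerge_comm {k b : ℕ} (hk : 1 ≤ k) (hkb : k ≤ b) (x : ℕ → A) :
    hmerge b (hmerge k x) = hmerge k (hmerge (b + 1) x) := by
  funext i
  rcases Nat.lt_trichotomy i (k - 1) with h | h | h
  · rw [hmerge_lt (by omega), hmerge_lt h, hmerge_lt h, hmerge_lt (by omega)]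
  · rcases eq_or_lt_of_le hkb with hbk | hbk
    · subst hbk
      rw [hmerge_eq h, hmerge_eq h, hmerge_eq rfl, hmerge_gt (by omega),
        hmerge_lt (by omega), hmerge_eq (by omega), mul_assoc, Nat.add_sub_cancel]
    · rw [hmerge_lt (by omega), hmerge_eq h, hmerge_eq h,
        hmerge_lt (by omega), hmerge_lt (by omega)]
  · rcases Nat.lt_trichotomy i (b - 1) with h2 | h2 | h2
    · rw [hmerge_lt h2, hmerge_gt h, hmerge_gt h, hmerge_lt (by omega)]
    · rw [hmerge_eq h2, hmerge_gt (by omega), hmerge_gt (by omega), hmerge_gt h,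
        hmerge_eq (by omega), Nat.add_sub_cancel, Nat.sub_add_cancel (by omega : 1 ≤ b)]
    · rw [hmerge_gt (by omega), hmerge_gt (by omega), hmerge_gt h, hmerge_gt (by omega)]

def hface : ℕ → ((ℕ → A) → A) → (ℕ → A) → A
  | 0, ω => fun x => x 0 * ω (hshift x)
  | k + 1, ω => fun x => ω (hmerge (k + 1) x)

lemma hshift_merge_one (x : ℕ → A) : hshift (hmerge 1 x) = hshift (hshift x) := by
  funext i; exact hmerge_gt (by omega) x

lemma hmerge_one_zero (x : ℕ → A) : hmerge 1 x 0 = x 0 * x 1 := by simp [hmerge]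

lemma hshift_merge (b : ℕ) (hb : 1 ≤ b) (x : ℕ → A) :
    hmerge b (hshift x) = hshift (hmerge (b + 1) x) := by
  funext i
  rcases Nat.lt_trichotomy i (b - 1) with h | h | h
  · rw [hmerge_lt h, show hshift (hmerge (b+1) x) i = hmerge (b+1) x (i+1) from rfl,
      hmerge_lt (by omega)]
    rfl
  · rw [hmerge_eq h, show hshift (hmerge (b+1) x) i = hmerge (b+1) x (i+1) from rfl,
      hmerge_eq (by omega), Nat.add_sub_cancel]
    show x (b - 1 + 1) * x (b + 1) = x b * x (b + 1)
    rw [Nat.sub_add_cancel hb]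
  · rw [hmerge_gt h, show hshift (hmerge (b+1) x) i = hmerge (b+1) x (i+1) from rfl,
      hmerge_gt (by omega)]
    rfl

lemma hmerge_zero (b : ℕ) (hb : 2 ≤ b) (x : ℕ → A) : hmerge b x 0 = x 0 :=
  hmerge_lt (by omega) x

lemma hface_swap {k b : ℕ} (hkb : k ≤ b) (ω : (ℕ → A) → A) (x : ℕ → A) :
    hface k (hface b ω) x = hface (b + 1) (hface k ω) x := by
  match k, b with
  | 0, 0 =>
    show x 0 * (hshift x 0 * ω (hshift (hshift x))) = hmerge 1 x 0 * ω (hshift (hmerge 1 x))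
    rw [hmerge_one_zero, hshift_merge_one, mul_assoc]
    rfl
  | 0, (t+1) =>
    show x 0 * ω (hmerge (t+1) (hshift x))
        = hmerge (t+2) x 0 * ω (hshift (hmerge (t+2) x))
    rw [hmerge_zero (t+2) (by omega), hshift_merge (t+1) (by omega)]
  | (s+1), (t+1) =>
    show ω (hmerge (t+1) (hmerge (s+1) x)) = ω (hmerge (s+1) (hmerge (t+2) x))
    rw [hmerge_comm (by omega) hkb]

lemma hface_sum_smul {ι : Type*} (k : ℕ) (S : Finset ι) (r : ι → ℂ)
    (f : ι → (ℕ → A) → A) (x : ℕ → A) :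
    hface k (fun y => ∑ s ∈ S, r s • f s y) x = ∑ s ∈ S, r s • hface k (f s) x := by
  match k with
  | 0 =>
    show x 0 * (∑ s ∈ S, r s • f s (hshift x)) = _
    rw [Finset.mul_sum]
    exact Finset.sum_congr rfl fun s _ => (mul_smul_comm _ _ _)
  | (k+1) => rfl

lemma hface_smul (k : ℕ) (r : ℂ) (f : (ℕ → A) → A) (x : ℕ → A) :
    hface k (fun y => r • f y) x = r • hface k f x := by
  match k with
  | 0 => exact mul_smul_comm _ _ _
  | (k+1) => rfl

noncomputable def Aop (q : ℂ) : ℕ → ℕ → ((ℕ → A) → A) → (ℕ → A) → A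
  | 0, _, ω => ω
  | j + 1, c, ω => fun x => ∑ k ∈ Finset.Icc j c, q ^ (k - j) • hface k (Aop q j (k - 1) ω) x

noncomputable def gs (q : ℂ) (t : ℕ) : ℂ := ∑ i ∈ Finset.range t, q ^ i

lemma gs_one (q : ℂ) : gs q 1 = 1 := by simp [gs]

lemma gs_succ (q : ℂ) (t : ℕ) : gs q (t + 1) = gs q t + q ^ t := Finset.sum_range_succ _ _

lemma Aop_succ (q : ℂ) (j c : ℕ) (ω : (ℕ → A) → A) :
    Aop q (j + 1) c ω = fun x =>
      ∑ k ∈ Finset.Icc j c, q ^ (k - j) • hface k (Aop q j (k - 1) ω) x := rfl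

lemma keyP (q : ℂ) : ∀ j c : ℕ, j ≤ c → ∀ (ω : (ℕ → A) → A) (x : ℕ → A),
    ∑ k ∈ Finset.range (c + 1), q ^ k • hface k (Aop q j (c - 1) ω) x
      = gs q (j + 1) • Aop q (j + 1) c ω x := by
  intro j
  induction j with
  | zero =>
    intro c _ ω x
    rw [gs_one, one_smul, Aop_succ]
    have h1 : Finset.range (c + 1) = Finset.Icc 0 c := by
      rw [← Nat.Ico_zero_eq_range, Finset.Ico_add_one_right_eq_Icc]
    rw [h1]
    exact Finset.sum_congr rfl fun k _ => by rw [Nat.sub_zero]; rfl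
  | succ j ih =>
    intro c hc ω x
    -- expand the inner Aop (j+1) (c-1)
    have step1 : ∀ (m : ℕ) (k : ℕ), hface k (Aop q (j + 1) m ω) x
        = ∑ b ∈ Finset.Icc j m, q ^ (b - j) • hface k (hface b (Aop q j (b - 1) ω)) x := by
      intro m k
      rw [Aop_succ]
      exact hface_sum_smul k _ _ _ x
    calc
      ∑ k ∈ Finset.range (c + 1), q ^ k • hface k (Aop q (j + 1) (c - 1) ω) x
          = ∑ k ∈ Finset.range (c + 1), ∑ b ∈ Finset.Icc j (c - 1),
              q ^ k • (q ^ (b - j) • hface k (hface b (Aop q j (b - 1) ω)) x) := by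
            exact Finset.sum_congr rfl fun k _ => by rw [step1, Finset.smul_sum]
      _ = ∑ b ∈ Finset.Icc j (c - 1), ∑ k ∈ Finset.range (c + 1),
              q ^ k • (q ^ (b - j) • hface k (hface b (Aop q j (b - 1) ω)) x) :=
            Finset.sum_comm
      _ = (∑ b ∈ Finset.Icc j (c - 1), ∑ k ∈ Finset.range (b + 1),
              q ^ k • (q ^ (b - j) • hface k (hface b (Aop q j (b - 1) ω)) x))
          + ∑ b ∈ Finset.Icc j (c - 1), ∑ k ∈ Finset.Ico (b + 1) (c + 1),
              q ^ k • (q ^ (b - j) • hface k (hface b (Aop q j (b - 1) ω)) x) := by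
            rw [← Finset.sum_add_distrib]
            refine Finset.sum_congr rfl fun b hb => ?_
            have hb' : b ≤ c - 1 := (Finset.mem_Icc.mp hb).2
            rw [Finset.range_eq_Ico,
              ← Finset.sum_Ico_consecutive _ (Nat.zero_le (b + 1)) (by omega),
              ← Finset.range_eq_Ico]
      _ = gs q (j + 1 + 1) • Aop q (j + 1 + 1) c ω x := by
            have hS1 : (∑ b ∈ Finset.Icc j (c - 1), ∑ k ∈ Finset.Ico (b + 1) (c + 1),
                  q ^ k • (q ^ (b - j) • hface k (hface b (Aop q j (b - 1) ω)) x))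
                = q ^ (j + 1) • Aop q (j + 1 + 1) c ω x := by
              rw [Finset.sum_comm' (t' := Finset.Icc (j + 1) c)
                (s' := fun k => Finset.Icc j (k - 1))
                (fun b k => by simp only [Finset.mem_Icc, Finset.mem_Ico]; omega)]
              rw [Aop_succ, Finset.smul_sum]
              refine Finset.sum_congr rfl fun k hk => ?_
              have hk' : j + 1 ≤ k := (Finset.mem_Icc.mp hk).1
              rw [← Finset.smul_sum, ← step1]
              rw [smul_smul, ← pow_add]
              congr 2
              omega
            have hS2 : (∑ b ∈ Finset.Icc j (c - 1), ∑ k ∈ Finset.range (b + 1),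
                  q ^ k • (q ^ (b - j) • hface k (hface b (Aop q j (b - 1) ω)) x))
                = gs q (j + 1) • Aop q (j + 1 + 1) c ω x := by
              have inner : ∀ b ∈ Finset.Icc j (c - 1),
                  (∑ k ∈ Finset.range (b + 1),
                    q ^ k • (q ^ (b - j) • hface k (hface b (Aop q j (b - 1) ω)) x))
                  = q ^ (b - j) • (gs q (j + 1) • hface (b + 1) (Aop q (j + 1) b ω) x) := by
                intro b hb
                have hjb : j ≤ b := (Finset.mem_Icc.mp hb).1
                have e1 : ∀ k ∈ Finset.range (b + 1),
                    q ^ k • (q ^ (b - j) • hface k (hface b (Aop q j (b - 1) ω)) x)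
                    = q ^ (b - j) • (q ^ k • hface (b + 1) (hface k (Aop q j (b - 1) ω)) x) := by
                  intro k hk
                  rw [hface_swap (Nat.lt_succ_iff.mp (Finset.mem_range.mp hk)), smul_comm]
                rw [Finset.sum_congr rfl e1, ← Finset.smul_sum]
                congr 1
                rw [← hface_sum_smul]
                have hin : (fun y => ∑ k ∈ Finset.range (b + 1),
                      q ^ k • hface k (Aop q j (b - 1) ω) y)
                    = fun y => gs q (j + 1) • Aop q (j + 1) b ω y :=
                  funext fun y => ih b hjb ω y
                rw [hin, hface_smul]
              rw [Finset.sum_congr rfl inner]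
              rw [Aop_succ, Finset.smul_sum]
              refine Finset.sum_nbij' (fun b => b + 1) (fun K => K - 1) ?_ ?_ ?_ ?_ ?_
              · intro b hb
                simp only [Finset.mem_Icc] at *
                omega
              · intro K hK
                simp only [Finset.mem_Icc] at *
                omega
              · intro b hb; simp
              · intro K hK
                simp only [Finset.mem_Icc] at hK
                show K - 1 + 1 = K
                omega
              · intro b hb
                have : b + 1 - (j + 1) = b - j := by omega
                rw [smul_comm, Nat.add_sub_cancel, this]
            rw [hS1, hS2, ← add_smul, ← gs_succ]

def Loc (n : ℕ) (ω : (ℕ → A) → A) : Prop :=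
  ∀ x y : ℕ → A, (∀ i < n, x i = y i) → ω x = ω y

lemma hface_loc {d k : ℕ} (hk : k ≤ d) {ω : (ℕ → A) → A} (hω : Loc d ω) :
    Loc (d + 1) (hface k ω) := by
  match k with
  | 0 =>
    intro x y h
    show x 0 * ω (hshift x) = y 0 * ω (hshift y)
    rw [h 0 (by omega), hω (hshift x) (hshift y) (fun i hi => h (i + 1) (by omega))]
  | (s + 1) =>
    intro x y h
    show ω (hmerge (s + 1) x) = ω (hmerge (s + 1) y)
    refine hω _ _ fun i hi => ?_
    rcases Nat.lt_trichotomy i s with h2 | h2 | h2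
    · rw [hmerge_lt (by omega), hmerge_lt (by omega), h i (by omega)]
    · subst h2
      rw [hmerge_eq (by omega), hmerge_eq (by omega)]
      simp only [Nat.add_sub_cancel]
      rw [h i (by omega), h (i + 1) (by omega)]
    · rw [hmerge_gt (by omega), hmerge_gt (by omega), h (i + 1) (by omega)]

lemma Aop_loc (q : ℂ) : ∀ (j c n : ℕ) (ω : (ℕ → A) → A),
    (j = 0 ∨ c + 1 ≤ n + j) → Loc n ω → Loc (n + j) (Aop q j c ω) := by
  intro j
  induction j with
  | zero => intro c n ω _ hω; exact hω
  | succ j ih =>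
    intro c n ω hc hω
    intro x y h
    show (∑ k ∈ Finset.Icc j c, q ^ (k - j) • hface k (Aop q j (k - 1) ω) x)
      = ∑ k ∈ Finset.Icc j c, q ^ (k - j) • hface k (Aop q j (k - 1) ω) y
    refine Finset.sum_congr rfl fun k hkm => ?_
    have hk : j ≤ k ∧ k ≤ c := Finset.mem_Icc.mp hkm
    have hc' : c + 1 ≤ n + (j + 1) := by rcases hc with h0 | h0 <;> omega
    congr 1
    have hloc : Loc (n + j) (Aop q j (k - 1) ω) := by
      refine ih (k - 1) n ω ?_ hω
      rcases Nat.eq_zero_or_pos j with hj | hj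
      · exact Or.inl hj
      · right; omega
    exact hface_loc (by omega) hloc x y (fun i hi => h i (by omega))

lemma sum_Icc_one {M : Type*} [AddCommMonoid M] (n : ℕ) (g : ℕ → M) :
    ∑ k ∈ Finset.Icc 1 n, g k = ∑ k ∈ Finset.range n, g (k + 1) := by
  rw [← Finset.Ico_add_one_right_eq_Icc, Finset.sum_Ico_eq_sum_range]
  exact Finset.sum_congr rfl fun i _ => by rw [add_comm]

lemma lemC {d : ℕ} {η : (ℕ → A) → A} (hη : Loc d η) (q : ℂ) (x : ℕ → A) :
    ∑ k ∈ Finset.range (d + 1 + 1), q ^ k • hface k (fun y => η y * y d) x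
      = (∑ k ∈ Finset.range (d + 1), q ^ k • hface k η x) * x (d + 1)
        + q ^ (d + 1) • (η x * x d * x (d + 1)) := by
  rw [Finset.sum_range_succ]
  congr 1
  · rw [Finset.sum_mul]
    refine Finset.sum_congr rfl fun k hk => ?_
    have hkd : k ≤ d := by simpa using Nat.lt_succ_iff.mp (Finset.mem_range.mp hk)
    rw [smul_mul_assoc]
    congr 1
    match k, hkd with
    | 0, _ =>
      show x 0 * (η (hshift x) * hshift x d) = x 0 * η (hshift x) * x (d + 1)
      rw [mul_assoc]; rfl
    | (s + 1), hkd =>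
      show η (hmerge (s + 1) x) * hmerge (s + 1) x d = η (hmerge (s + 1) x) * x (d + 1)
      rw [hmerge_gt (by omega)]
  · show q ^ (d + 1) • ((fun y => η y * y d) (hmerge (d + 1) x)) = _
    have h1 : η (hmerge (d + 1) x) = η x :=
      hη _ _ fun i hi => hmerge_lt (by omega) x
    simp only []
    have h2 : hmerge (d + 1) x d = x d * x (d + 1) := by
      rw [hmerge_eq (by omega : d = (d + 1) - 1), Nat.add_sub_cancel]
    rw [h1, h2, ← mul_assoc]

end QH

open QH in
lemma hDelta_eq {A : Type*} [Ring A] [Algebra ℂ A] (q : ℂ) (n : ℕ) (ω : (ℕ → A) → A)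
    (x : ℕ → A) :
    hDelta q n ω x = (∑ k ∈ Finset.range (n + 1), q ^ k • hface k ω x)
      - q ^ n • (ω x * x n) := by
  have h : ∑ k ∈ Finset.range (n + 1), q ^ k • hface k ω x
      = x 0 * ω (hshift x) + ∑ k ∈ Finset.Icc 1 n, q ^ k • ω (hmerge k x) := by
    rw [Finset.sum_range_succ', sum_Icc_one, pow_zero, one_smul, add_comm]
    rfl
  rw [h]
  rfl

open QH

lemma hDelta_comb {A : Type*} [Ring A] [Algebra ℂ A] (q : ℂ) (d : ℕ) (c r : ℂ)
    (F G : (ℕ → A) → A) (x : ℕ → A) :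
    hDelta q d (fun y => c • (F y - r • G y)) x
      = c • hDelta q d F x - (c * r) • hDelta q d G x := by
  simp only [hDelta]
  have hs : ∀ (S : Finset ℕ) (f g : ℕ → A),
      (∑ k ∈ S, q ^ k • (c • (f k - r • g k)))
        = c • (∑ k ∈ S, q ^ k • f k) - (c * r) • (∑ k ∈ S, q ^ k • g k) := by
    intro S f g
    rw [Finset.smul_sum, Finset.smul_sum, ← Finset.sum_sub_distrib]
    refine Finset.sum_congr rfl fun k _ => by module
  rw [hs]
  simp only [mul_sub, sub_mul, mul_smul_comm, smul_mul_assoc, smul_sub, smul_smul]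
  module

lemma invariant {A : Type*} [Ring A] [Algebra ℂ A] (q : ℂ) (n : ℕ) (ω : (ℕ → A) → A)
    (hω : Loc n ω) :
    ∀ (m : ℕ) (x : ℕ → A), hDeltaIter q (m + 1) n ω x
      = (∏ t ∈ Finset.range (m + 1), gs q (t + 1)) •
          (Aop q (m + 1) (n + m) ω x
            - q ^ n • (Aop q m (n + m - 1) ω x * x (n + m))) := by
  intro m
  induction m with
  | zero =>
    intro x
    show hDelta q (n + 0) (hDeltaIter q 0 n ω) x = _
    have k1 : ∑ k ∈ Finset.range (n + 0 + 1), q ^ k • hface k ((hDeltaIter q 0 n ω : (ℕ → A) → A)) x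
        = gs q (0 + 1) • Aop q (0 + 1) (n + 0) ω x :=
      keyP q 0 (n + 0) (Nat.zero_le _) ω x
    rw [hDelta_eq, k1, gs_one, one_smul]
    simp [gs_one]
    rfl
  | succ m ih =>
    intro x
    show hDelta q (n + (m + 1)) (hDeltaIter q (m + 1) n ω) x = _
    set C : ℂ := ∏ t ∈ Finset.range (m + 1), gs q (t + 1) with hC
    have hfun : hDeltaIter q (m + 1) n ω
        = fun z => C • (Aop q (m + 1) (n + m) ω z
            - q ^ n • ((fun y => Aop q m (n + m - 1) ω y * y (n + m)) z)) :=
      funext fun z => ih z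
    rw [hfun, hDelta_comb, hDelta_eq, hDelta_eq]
    -- keyP for the A-part
    have k1 : ∑ k ∈ Finset.range (n + (m + 1) + 1), q ^ k •
          hface k (Aop q (m + 1) (n + m) ω) x
        = gs q (m + 1 + 1) • Aop q (m + 1 + 1) (n + (m + 1)) ω x :=
      keyP q (m + 1) (n + (m + 1)) (by omega) ω x
    -- locality of the inner A
    have hloc : Loc (n + m) (Aop q m (n + m - 1) ω) := by
      have := Aop_loc q m (n + m - 1) n ω (by rcases Nat.eq_zero_or_pos m with h | h
                                              · exact Or.inl h
                                              · right; omega) hω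
      exact this
    have k2 : ∑ k ∈ Finset.range (n + m + 1 + 1), q ^ k •
          hface k (fun y => Aop q m (n + m - 1) ω y * y (n + m)) x
        = (∑ k ∈ Finset.range (n + m + 1), q ^ k • hface k (Aop q m (n + m - 1) ω) x)
            * x (n + m + 1)
          + q ^ (n + m + 1) • (Aop q m (n + m - 1) ω x * x (n + m) * x (n + m + 1)) :=
      lemC hloc q x
    have k3 : ∑ k ∈ Finset.range (n + m + 1), q ^ k • hface k (Aop q m (n + m - 1) ω) x
        = gs q (m + 1) • Aop q (m + 1) (n + m) ω x :=
      keyP q m (n + m) (by omega) ω x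
    have e1 : n + (m + 1) = n + m + 1 := by omega
    rw [e1] at k1 ⊢
    rw [k1, k2, k3]
    -- now pure scalar/module algebra
    have hg : gs q (m + 1 + 1) = gs q (m + 1) + q ^ (m + 1) := gs_succ q (m + 1)
    have hprod : (∏ t ∈ Finset.range (m + 1 + 1), gs q (t + 1)) = C * gs q (m + 1 + 1) := by
      rw [Finset.prod_range_succ]
    rw [hprod, hg]
    set X := Aop q (m + 1 + 1) (n + m + 1) ω x
    set Y := Aop q (m + 1) (n + m) ω x
    set u := x (n + m + 1)
    set Z := Aop q m (n + m - 1) ω x * x (n + m) * u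
    rw [show n + m + 1 - 1 = n + m from rfl]
    -- goal should now be a module identity
    rw [smul_mul_assoc]
    have hpow : q ^ (n + m + 1) = q ^ n * q ^ (m + 1) := by rw [← pow_add]; ring_nf
    rw [hpow]
    module

lemma part2 {A : Type*} [Ring A] [Algebra ℂ A] (q : ℂ) (hq1 : q ≠ 1) :
    ∀ N : ℕ, 2 ≤ N → IsPrimitiveRoot q N →
      ∀ (n : ℕ) (ω : (ℕ → A) → A), IsHCochain n ω →
        ∀ x, hDeltaIter q N n ω x = 0 := by
  intro N hN hprim n ω hω x
  obtain ⟨m, rfl⟩ : ∃ m, N = m + 1 := ⟨N - 1, by omega⟩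
  have hgs : gs q (m + 1) = 0 := by
    have hpow : q ^ (m + 1) = 1 := hprim.pow_eq_one
    rw [gs, geom_sum_eq hq1, hpow, sub_self, zero_div]
  have hprod : (∏ t ∈ Finset.range (m + 1), gs q (t + 1)) = 0 :=
    Finset.prod_eq_zero (Finset.self_mem_range_succ m) hgs
  rw [invariant q n ω hω.1 m x, hprod, zero_smul]

lemma sum_Icc_one' {M : Type*} [AddCommMonoid M] (n : ℕ) (g : ℕ → M) :
    ∑ k ∈ Finset.Icc 1 n, g k = ∑ k ∈ Finset.range n, g (k + 1) := by
  rw [← Finset.Ico_add_one_right_eq_Icc, Finset.sum_Ico_eq_sum_range]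
  exact Finset.sum_congr rfl fun i _ => by rw [add_comm]

lemma sum_split {M : Type*} [AddCommMonoid M] (a b : ℕ) (f : ℕ → M) :
    ∑ k ∈ Finset.Icc 1 (a + b), f k
      = (∑ k ∈ Finset.Icc 1 a, f k) + ∑ k ∈ Finset.Icc 1 b, f (a + k) := by
  have e1 : Finset.Icc 1 (a + b) = Finset.Ioc 0 (a + b) := by
    ext k; simp [Finset.mem_Icc, Finset.mem_Ioc]; omega
  have e2 : Finset.Icc 1 a = Finset.Ioc 0 a := by
    ext k; simp [Finset.mem_Icc, Finset.mem_Ioc]; omega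
  rw [e1, e2, ← Finset.sum_Ioc_consecutive f (Nat.zero_le a) (Nat.le_add_right a b)]
  congr 1
  rw [← Finset.Ico_add_one_add_one_eq_Ioc, Finset.sum_Ico_eq_sum_range, sum_Icc_one']
  rw [show a + b + 1 - (a + 1) = b from by omega]
  exact Finset.sum_congr rfl fun i _ => by congr 1; omega


lemma qh_part1 {A : Type*} [Ring A] [Algebra ℂ A] (q : ℂ) (a b : ℕ) (α β : (ℕ → A) → A)
    (hα1 : ∀ x y : ℕ → A, (∀ i < a, x i = y i) → α x = α y) (x : ℕ → A) :
    hDelta q (a + b) (hCochainMul a α β) x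
      = hCochainMul (a + 1) (hDelta q a α) β x + q ^ a • hCochainMul a α (hDelta q b β) x := by
  simp only [hDelta, hCochainMul, Nat.add_zero]
  have e5 : (fun i => x (a + (i + 1))) = (fun i => x (a + 1 + i)) := by
    funext i; congr 1; omega
  have e6 : (fun i => x (a + i + 1)) = (fun i => x (a + 1 + i)) := by
    funext i; congr 1; omega
  rw [e5, e6, sum_split a b]
  have hA : ∀ k ∈ Finset.Icc 1 a,
      q ^ k • ((α fun i => if i < k - 1 then x i else if i = k - 1 then x (k - 1) * x k
                  else x (i + 1)) *
          β fun i => if a + i < k - 1 then x (a + i) else if a + i = k - 1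
                  then x (k - 1) * x k else x (a + i + 1))
        = q ^ k • ((α fun i => if i < k - 1 then x i else if i = k - 1 then x (k - 1) * x k
                  else x (i + 1)) * β fun i => x (a + 1 + i)) := by
    intro k hk
    obtain ⟨hk1, hk2⟩ := Finset.mem_Icc.mp hk
    congr 1
    refine congrArg (α _ * ·) (congrArg β (funext fun i => ?_))
    rw [if_neg (show ¬ a + i < k - 1 by omega), if_neg (show ¬ a + i = k - 1 by omega)]
    congr 1
    omega
  have hB : ∀ k ∈ Finset.Icc 1 b,
      q ^ (a + k) • ((α fun i => if i < a + k - 1 then x i else if i = a + k - 1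
                  then x (a + k - 1) * x (a + k) else x (i + 1)) *
          β fun i => if a + i < a + k - 1 then x (a + i) else if a + i = a + k - 1
                  then x (a + k - 1) * x (a + k) else x (a + i + 1))
        = (q ^ a * q ^ k) • (α x *
            β fun i => if i < k - 1 then x (a + i) else if i = k - 1
                  then x (a + (k - 1)) * x (a + k) else x (a + (i + 1))) := by
    intro k hk
    obtain ⟨hk1, hk2⟩ := Finset.mem_Icc.mp hk
    have hαx : (α fun i => if i < a + k - 1 then x i else if i = a + k - 1
          then x (a + k - 1) * x (a + k) else x (i + 1)) = α x :=
      hα1 _ _ fun i hi => by rw [if_pos (by omega)]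
    have hβarg : (fun i => if a + i < a + k - 1 then x (a + i) else if a + i = a + k - 1
          then x (a + k - 1) * x (a + k) else x (a + i + 1))
        = (fun i => if i < k - 1 then x (a + i) else if i = k - 1
          then x (a + (k - 1)) * x (a + k) else x (a + (i + 1))) := by
      funext i
      rcases Nat.lt_trichotomy i (k - 1) with h | h | h
      · rw [if_pos (show a + i < a + k - 1 by omega), if_pos (show i < k - 1 from h)]
      · rw [if_neg (show ¬ a + i < a + k - 1 by omega), if_neg (show ¬ i < k - 1 by omega),
          if_pos (show a + i = a + k - 1 by omega), if_pos (show i = k - 1 from h),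
          show a + k - 1 = a + (k - 1) from by omega]
      · rw [if_neg (show ¬ a + i < a + k - 1 by omega), if_neg (show ¬ i < k - 1 by omega),
          if_neg (show ¬ a + i = a + k - 1 by omega), if_neg (show ¬ i = k - 1 by omega),
          show a + i + 1 = a + (i + 1) from by omega]
    rw [hαx, hβarg, pow_add]
  rw [Finset.sum_congr rfl hA, Finset.sum_congr rfl hB]
  simp only [add_mul, sub_mul, Finset.sum_mul, mul_add, mul_sub, Finset.mul_sum,
    smul_mul_assoc, mul_smul_comm, smul_add, smul_sub, Finset.smul_sum, smul_smul, mul_assoc]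
  module

/-- `δ_q` satisfies the `q`-Leibniz rule
`δ_q(αβ) = δ_q(α)β + q^a α δ_q(β)` for `α ∈ C^a(𝒜,𝒜)`, and `(δ_q)^N = 0`
whenever `q` is a primitive `N`-th root of unity. -/
theorem hochschild_q_differential
    (A : Type*) [Ring A] [Algebra ℂ A]
    (q : ℂ) (hq0 : q ≠ 0) (hq1 : q ≠ 1) :
    (∀ (a b : ℕ) (α β : (ℕ → A) → A), IsHCochain a α → IsHCochain b β →
      ∀ x, hDelta q (a + b) (hCochainMul a α β) x
        = hCochainMul (a + 1) (hDelta q a α) β x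
          + q ^ a • hCochainMul a α (hDelta q b β) x) ∧
    (∀ N : ℕ, 2 ≤ N → IsPrimitiveRoot q N →
      ∀ (n : ℕ) (ω : (ℕ → A) → A), IsHCochain n ω →
        ∀ x, hDeltaIter q N n ω x = 0) := by
  constructor
  · intro a b α β hα hβ x
    exact qh_part1 q a b α β hα.1 x
  · exact part2 q hq1
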